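/- Let X be a topological space and 𝒜,ℬ ⊆ ℘(X), where every member of 𝒜 is a proper subset of X that is the intersection of countably many open subsets of X (a Gδ set). Consider the generalized point-open game: in round n One picks A_n ∈ 𝒜, Two responds with an open set U_n ⊆ X with A_n ⊆ U_n and U_n ≠ X, and One wins iff every B ∈ ℬ is contained in some U_n. Then the following are equivalent: (i) One has a winning strategy in this game; (ii) there is a countable family ℱ ⊆ 𝒜 with every B ∈ ℬ contained in some member of ℱ (i.e., cof(𝒜;ℬ,⊆) ≤ ω); (iii) One has a winning predetermined strategy in this game. -/

import Mathlib

open Set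

private noncomputable def posAux {X : Type*} (σ : List (Set X) → Set X)
    (g : Set X → ℕ → Set X) : List ℕ → List (Set X)
  | [] => []
  | (k :: s) => posAux σ g s ++ [g (σ (posAux σ g s)) k]

private lemma gdec {X : Type*} [TopologicalSpace X] (𝒜 : Set (Set X))
    (hproper : ∀ A ∈ 𝒜, A ≠ univ) (hGδ : ∀ A ∈ 𝒜, IsGδ A) :
    ∃ g : Set X → ℕ → Set X, ∀ A ∈ 𝒜,
      (∀ k, IsOpen (g A k) ∧ A ⊆ g A k ∧ g A k ≠ univ) ∧ (⋂ k, g A k) = A := by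
  have h : ∀ A : Set X, ∃ h : ℕ → Set X, A ∈ 𝒜 →
      (∀ k, IsOpen (h k) ∧ A ⊆ h k ∧ h k ≠ univ) ∧ (⋂ k, h k) = A := by
    intro A
    by_cases hA : A ∈ 𝒜
    · obtain ⟨T, hTopen, hTc, hTA⟩ := hGδ A hA
      have hTne : T.Nonempty := by
        rcases T.eq_empty_or_nonempty with rfl | h
        · exact absurd (hTA.trans sInter_empty) (hproper A hA)
        · exact h
      obtain ⟨f, hf⟩ := Set.Countable.exists_eq_range hTc hTne
      have hAf : A = ⋂ k, f k := by rw [hTA, hf, sInter_range]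
      obtain ⟨x, hx⟩ := (ne_univ_iff_exists_notMem A).mp (hproper A hA)
      have hx' : x ∉ ⋂ k, f k := hAf ▸ hx
      have hj' : ∃ j, x ∉ f j := by simpa using hx'
      obtain ⟨j, hj⟩ := hj'
      have hopen : ∀ m, IsOpen (f m) := fun m => hTopen _ (hf ▸ mem_range_self m)
      refine ⟨fun k => f k ∩ f j, fun _ => ⟨fun k => ⟨(hopen k).inter (hopen j), ?_, ?_⟩, ?_⟩⟩
      · intro y hy
        have hy' : ∀ m, y ∈ f m := by
          rw [hAf] at hy; simpa using hy
        exact ⟨hy' k, hy' j⟩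
      · intro hu
        exact hj ((Set.eq_univ_iff_forall.mp hu x).2)
      · ext y
        simp only [mem_iInter, mem_inter_iff, hAf]
        constructor
        · intro hy; exact fun m => (hy m).1
        · intro hy; exact fun m => ⟨hy m, hy j⟩
    · exact ⟨fun _ => ∅, fun h => absurd h hA⟩
  choose g hg using h
  exact ⟨g, fun A hA => hg A hA⟩

private lemma keyAux {X : Type*} [TopologicalSpace X] (𝒜 : Set (Set X)) (g : Set X → ℕ → Set X)
    (hg : ∀ A ∈ 𝒜, (∀ k, IsOpen (g A k) ∧ A ⊆ g A k ∧ g A k ≠ univ) ∧ (⋂ k, g A k) = A)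
    (σ : List (Set X) → Set X) (hσ : ∀ l, σ l ∈ 𝒜) (B : Set X)
    (hwin : ∀ U : ℕ → Set X,
      (∀ n, IsOpen (U n) ∧ σ (List.ofFn fun i : Fin n => U i) ⊆ U n ∧ U n ≠ univ) →
      ∃ n, B ⊆ U n) :
    ∃ s : List ℕ, B ⊆ σ (posAux σ g s) := by
  by_contra h
  push_neg at h
  have hk : ∀ s : List ℕ, ∃ k, ¬ B ⊆ g (σ (posAux σ g s)) k := by
    intro s
    have h1 := h s
    have heq := (hg _ (hσ (posAux σ g s))).2
    by_contra hc
    push_neg at hc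
    exact h1 (by rw [← heq]; exact subset_iInter hc)
  choose k hk using hk
  set cs : ℕ → List ℕ := fun n => Nat.rec ([] : List ℕ) (fun _ s => k s :: s) n with hcs
  set U : ℕ → Set X := fun n => g (σ (posAux σ g (cs n))) (k (cs n)) with hU
  have hpos : ∀ n, List.ofFn (fun i : Fin n => U i) = posAux σ g (cs n) := by
    intro n
    induction n with
    | zero => simp [posAux]; rfl
    | succ n ih =>
      have hstep : cs (n + 1) = k (cs n) :: cs n := rfl
      rw [hstep]
      show List.ofFn (fun i : Fin (n+1) => U i) =
        posAux σ g (cs n) ++ [g (σ (posAux σ g (cs n))) (k (cs n))]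
      rw [List.ofFn_succ']
      simp only [List.concat_eq_append, Fin.coe_castSucc, Fin.val_last]
      rw [ih]
  have hcond : ∀ n, IsOpen (U n) ∧ σ (List.ofFn fun i : Fin n => U i) ⊆ U n ∧ U n ≠ univ := by
    intro n
    have hA := hg _ (hσ (posAux σ g (cs n)))
    have h3 := hA.1 (k (cs n))
    refine ⟨h3.1, ?_, h3.2.2⟩
    rw [hpos n]
    exact h3.2.1
  obtain ⟨n, hn⟩ := hwin U hcond
  exact hk (cs n) hn

theorem stmt17 {X : Type*} [TopologicalSpace X] (𝒜 ℬ : Set (Set X))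
    (hproper : ∀ A ∈ 𝒜, A ≠ univ) (hGδ : ∀ A ∈ 𝒜, IsGδ A) :
    ((∃ σ : List (Set X) → Set X, (∀ l, σ l ∈ 𝒜) ∧
        ∀ U : ℕ → Set X,
          (∀ n, IsOpen (U n) ∧ σ (List.ofFn fun i : Fin n => U i) ⊆ U n ∧ U n ≠ univ) →
          ∀ B ∈ ℬ, ∃ n, B ⊆ U n) ↔
      (∃ A : ℕ → Set X, (∀ n, A n ∈ 𝒜) ∧ ∀ B ∈ ℬ, ∃ n, B ⊆ A n)) ∧
    ((∃ A : ℕ → Set X, (∀ n, A n ∈ 𝒜) ∧ ∀ B ∈ ℬ, ∃ n, B ⊆ A n) ↔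
      (∃ p : ℕ → Set X, (∀ n, p n ∈ 𝒜) ∧
        ∀ U : ℕ → Set X, (∀ n, IsOpen (U n) ∧ p n ⊆ U n ∧ U n ≠ univ) →
          ∀ B ∈ ℬ, ∃ n, B ⊆ U n)) := by
  obtain ⟨g, hg⟩ := gdec 𝒜 hproper hGδ
  constructor
  · constructor
    · rintro ⟨σ, hσ, hwin⟩
      refine ⟨fun n => σ (posAux σ g (Denumerable.ofNat (List ℕ) n)),
        fun n => hσ _, fun B hB => ?_⟩
      obtain ⟨s, hs⟩ := keyAux 𝒜 g hg σ hσ B (fun U hU => hwin U hU B hB)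
      exact ⟨Encodable.encode s, by simpa [Denumerable.ofNat_encode] using hs⟩
    · rintro ⟨A, hA, hcov⟩
      refine ⟨fun l => A l.length, fun l => hA _, fun U hU B hB => ?_⟩
      obtain ⟨n, hn⟩ := hcov B hB
      have h2 := (hU n).2.1
      simp only [List.length_ofFn] at h2
      exact ⟨n, hn.trans h2⟩
  · constructor
    · rintro ⟨A, hA, hcov⟩
      exact ⟨A, hA, fun U hU B hB =>
        let ⟨n, hn⟩ := hcov B hB
        ⟨n, hn.trans (hU n).2.1⟩⟩
    · rintro ⟨p, hp, hwin⟩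
      refine ⟨p, hp, fun B hB => ?_⟩
      by_contra hc
      push_neg at hc
      have hk : ∀ n : ℕ, ∃ k, ¬ B ⊆ g (p n) k := by
        intro n
        have heq := (hg _ (hp n)).2
        by_contra hc'
        push_neg at hc'
        exact hc n (by rw [← heq]; exact subset_iInter hc')
      choose k hk using hk
      have hcond : ∀ n, IsOpen (g (p n) (k n)) ∧ p n ⊆ g (p n) (k n) ∧ g (p n) (k n) ≠ univ := by
        intro n
        exact (hg _ (hp n)).1 (k n)
      obtain ⟨n, hn⟩ := hwin (fun n => g (p n) (k n)) hcond B hB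
      exact hk n hn
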